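/- The factor 2 in the sufficiency bound for exploration by energy-sharing agents is asymptotically optimal even for trees: let k ≥ 1 and consider the star K_{1,2k} with center c, leaves l_1, …, l_{2k}, and all 2k edges of weight 1 (total weight 2k). Place one agent at the center c with energy e ≥ 0 and k agents with energy 0 at the leaves l_1, …, l_k. Then, in the discrete energy-sharing exploration model, a strategy exploring the star exists if and only if e ≥ 4k − 1. (Thus the total energy required is 4k − 1, which approaches twice the total edge weight 2k as k grows.) -/

import Mathlib

/-- One step of the discrete energy-sharing exploration model on an edge-weighted graph.
The state records the positions of the `k` agents, their current energies, and the set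
of edges explored so far.  A step is either a move of one agent along an edge (which
costs the weight of the edge and marks it explored) or a transfer of a positive amount
of energy between two co-located agents. -/
inductive ExpStep {V : Type} (G : SimpleGraph V) (w : Sym2 V → ℝ) (k : ℕ) :
    ((Fin k → V) × (Fin k → ℝ) × Set (Sym2 V)) →
    ((Fin k → V) × (Fin k → ℝ) × Set (Sym2 V)) → Prop
  | move (pos : Fin k → V) (en : Fin k → ℝ) (X : Set (Sym2 V)) (i : Fin k) (v : V)
      (hadj : G.Adj (pos i) v) (hen : w s(pos i, v) ≤ en i) :
      ExpStep G w k (pos, en, X)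
        (Function.update pos i v,
         Function.update en i (en i - w s(pos i, v)),
         insert s(pos i, v) X)
  | transfer (pos : Fin k → V) (en : Fin k → ℝ) (X : Set (Sym2 V)) (i j : Fin k)
      (hij : i ≠ j) (hpos : pos i = pos j) (a : ℝ) (ha : 0 < a) (ha' : a ≤ en i) :
      ExpStep G w k (pos, en, X)
        (pos, Function.update (Function.update en i (en i - a)) j (en j + a), X)

/-- The agents, starting at positions `pos₀` with energies `en₀`, can explore `G`:
some finite sequence of moves and transfers marks every edge of `G` explored. -/
def CanExplore {V : Type} (G : SimpleGraph V) (w : Sym2 V → ℝ) (k : ℕ)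
    (pos₀ : Fin k → V) (en₀ : Fin k → ℝ) : Prop :=
  ∃ st : (Fin k → V) × (Fin k → ℝ) × Set (Sym2 V),
    Relation.ReflTransGen (ExpStep G w k) (pos₀, en₀, ∅) st ∧ G.edgeSet ⊆ st.2.2

/-- The star graph `K_{1,n}`: the center is `none`, the `n` leaves are `some j`. -/
def starGraph (n : ℕ) : SimpleGraph (Option (Fin n)) where
  Adj x y := (x = none ∧ y ≠ none) ∨ (y = none ∧ x ≠ none)
  symm := by constructor; intro x y h; tauto
  loopless := by constructor; intro x h; tauto


section Aux

/-- helper: sum over an updated function -/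
lemma sum_update_helper {n : ℕ} (f : Fin n → ℝ) (i : Fin n) (b : ℝ) :
    ∑ x, Function.update f i b x = ∑ x, f x - f i + b := by
  rw [Finset.sum_update_of_mem (Finset.mem_univ i),
    Finset.sum_eq_sum_sdiff_singleton_add (Finset.mem_univ i) f]
  ring

open Classical in
/-- number of star edges explored -/
noncomputable def expl (k : ℕ) (X : Set (Sym2 (Option (Fin (2*k))))) : ℝ :=
  ∑ j : Fin (2*k), if s((none : Option (Fin (2*k))), some j) ∈ X then (1:ℝ) else 0

/-- number of agents at leaves -/
noncomputable def Lnum (k : ℕ) (pos : Fin (k+1) → Option (Fin (2*k))) : ℝ :=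
  ∑ i : Fin (k+1), if pos i = none then (0:ℝ) else 1

open Classical in
lemma expl_insert_le (k : ℕ) (a : Sym2 (Option (Fin (2*k)))) (X : Set (Sym2 (Option (Fin (2*k))))) :
    expl k (insert a X) ≤ expl k X + 1 := by
  by_cases h : ∃ j₀ : Fin (2*k), (s((none : Option (Fin (2*k))), some j₀) : Sym2 _) = a
  · obtain ⟨j₀, hj₀⟩ := h
    have hle : ∀ j : Fin (2*k),
        (if s((none : Option (Fin (2*k))), some j) ∈ insert a X then (1:ℝ) else 0) ≤
        (if s((none : Option (Fin (2*k))), some j) ∈ X then (1:ℝ) else 0) +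
        (if j = j₀ then (1:ℝ) else 0) := by
      intro j
      by_cases hm : s((none : Option (Fin (2*k))), some j) ∈ insert a X
      · rw [if_pos hm]
        rcases Set.mem_insert_iff.mp hm with heq | hmem
        · have : j = j₀ := by
            rw [← hj₀] at heq
            simpa using heq
          rw [if_pos this]
          split_ifs <;> norm_num
        · rw [if_pos hmem]; split_ifs <;> norm_num
      · rw [if_neg hm]; split_ifs <;> norm_num
    calc expl k (insert a X) ≤ ∑ j : Fin (2*k),
          ((if s((none : Option (Fin (2*k))), some j) ∈ X then (1:ℝ) else 0) +
           (if j = j₀ then (1:ℝ) else 0)) := by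
            refine Finset.sum_le_sum fun j _ => ?_
            convert hle j using 2
            rfl
      _ = expl k X + 1 := by
          rw [Finset.sum_add_distrib, Finset.sum_ite_eq' Finset.univ j₀ (fun _ => (1:ℝ))]
          simp [expl]
  · have : expl k (insert a X) = expl k X := by
      unfold expl
      refine Finset.sum_congr rfl (fun j _ => ?_)
      congr 1
      simp only [Set.mem_insert_iff, eq_iff_iff]
      constructor
      · rintro (heq | hm)
        · exact absurd ⟨j, heq⟩ h
        · exact hm
      · exact Or.inr
    linarith

lemma Lnum_update (k : ℕ) (pos : Fin (k+1) → Option (Fin (2*k))) (i : Fin (k+1))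
    (v : Option (Fin (2*k))) :
    Lnum k (Function.update pos i v) =
      Lnum k pos - (if pos i = none then 0 else 1) + (if v = none then 0 else 1) := by
  unfold Lnum
  rw [show (∑ x, if Function.update pos i v x = none then (0:ℝ) else 1) =
      ∑ x, Function.update (fun x => if pos x = none then (0:ℝ) else 1) i
        (if v = none then 0 else 1) x from
    Finset.sum_congr rfl (fun x _ =>
      Function.apply_update (fun _ o => if o = none then (0:ℝ) else 1) pos i v x),
    sum_update_helper]

end Aux

/-- The invariant for the lower bound. -/
def StarInv (k : ℕ) (e : ℝ)
    (st : (Fin (k+1) → Option (Fin (2*k))) × (Fin (k+1) → ℝ) ×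
      Set (Sym2 (Option (Fin (2*k))))) : Prop :=
  (∀ i, 0 ≤ st.2.1 i) ∧
  (∀ (j : Fin (2*k)) (i : Fin (k+1)), s((none : Option (Fin (2*k))), some j) ∉ st.2.2 →
      st.1 i = some j → st.2.1 i = 0) ∧
  2 * expl k st.2.2 + (k : ℝ) - Lnum k st.1 ≤ e - ∑ i, st.2.1 i

lemma inv_step {k : ℕ} {e : ℝ}
    {st st' : (Fin (k+1) → Option (Fin (2*k))) × (Fin (k+1) → ℝ) ×
      Set (Sym2 (Option (Fin (2*k))))}
    (h : ExpStep (starGraph (2*k)) (fun _ => (1:ℝ)) (k+1) st st')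
    (hi : StarInv k e st) : StarInv k e st' := by
  obtain ⟨hnn, haux, hineq⟩ := hi
  cases h with
  | move pos en X i v hadj hen =>
    simp only [StarInv] at *
    have hsum : ∑ x, Function.update en i (en i - 1) x = (∑ x, en x) - 1 := by
      rw [sum_update_helper]; ring
    rcases hadj with ⟨h1, h2⟩ | ⟨h1, h2⟩
    · -- enter: pos i = none, v = some j
      obtain ⟨j, rfl⟩ := Option.ne_none_iff_exists'.mp h2
      refine ⟨?_, ?_, ?_⟩
      · intro i'
        by_cases hii : i' = i
        · subst hii; rw [Function.update_self]; linarith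
        · rw [Function.update_of_ne hii]; exact hnn i'
      · intro j' i' hnot hpos'
        have hnotX : s((none : Option (Fin (2*k))), some j') ∉ X :=
          fun hm => hnot (Set.mem_insert_iff.mpr (Or.inr hm))
        have hne : s((none : Option (Fin (2*k))), some j') ≠ s(pos i, some j) :=
          fun heq => hnot (Set.mem_insert_iff.mpr (Or.inl heq))
        by_cases hii : i' = i
        · subst hii
          rw [Function.update_self] at hpos'
          exact absurd (by rw [h1, hpos'] : s((none : Option (Fin (2*k))), some j') =
            s(pos i', some j)) hne
        · rw [Function.update_of_ne hii] at hpos' ⊢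
          exact haux j' i' hnotX hpos'
      · have hL : Lnum k (Function.update pos i (some j)) = Lnum k pos + 1 := by
          rw [Lnum_update, h1]; simp
        have hX := expl_insert_le k s(pos i, some j) X
        rw [hsum, hL]
        linarith
    · -- exit: v = none, pos i = some j
      obtain ⟨j, hj⟩ := Option.ne_none_iff_exists'.mp h2
      have hmem : s((none : Option (Fin (2*k))), some j) ∈ X := by
        by_contra hc
        have := haux j i hc hj
        linarith
      have hXeq : insert s(pos i, v) X = X := by
        rw [Set.insert_eq_self, hj, h1]
        rw [Sym2.eq_swap]
        exact hmem
      rw [hXeq]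
      refine ⟨?_, ?_, ?_⟩
      · intro i'
        by_cases hii : i' = i
        · subst hii; rw [Function.update_self]; linarith
        · rw [Function.update_of_ne hii]; exact hnn i'
      · intro j' i' hnot hpos'
        by_cases hii : i' = i
        · subst hii
          rw [Function.update_self, h1] at hpos'
          exact absurd hpos' (by simp)
        · rw [Function.update_of_ne hii] at hpos' ⊢
          exact haux j' i' hnot hpos'
      · have hL : Lnum k (Function.update pos i v) = Lnum k pos - 1 := by
          rw [Lnum_update, hj, h1]; simp
        rw [hsum, hL]
        linarith
  | transfer pos en X i j hij hpos a ha ha' =>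
    simp only [StarInv] at *
    have henj : Function.update en i (en i - a) j = en j := Function.update_of_ne (Ne.symm hij) _ _
    refine ⟨?_, ?_, ?_⟩
    · intro i'
      by_cases hj' : i' = j
      · subst hj'
        rw [Function.update_self]
        have := hnn i; have := hnn i'
        linarith
      · rw [Function.update_of_ne hj']
        by_cases hi' : i' = i
        · subst hi'; rw [Function.update_self]; linarith
        · rw [Function.update_of_ne hi']; exact hnn i'
    · intro j' i' hnot hpos'
      by_cases hj' : i' = j
      · subst hj'
        have h0 : en i = 0 := haux j' i hnot (by rw [hpos, hpos'])
        linarith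
      · rw [Function.update_of_ne hj']
        by_cases hi' : i' = i
        · subst hi'
          have h0 : en i' = 0 := haux j' i' hnot hpos'
          linarith
        · rw [Function.update_of_ne hi']; exact haux j' i' hnot hpos'
    · have : ∑ x, Function.update (Function.update en i (en i - a)) j (en j + a) x
          = ∑ x, en x := by
        rw [sum_update_helper, henj, sum_update_helper]; ring
      rw [this]
      linarith

def Xn (k n : ℕ) : Set (Sym2 (Option (Fin (2*k)))) :=
  {p | ∃ j : Fin (2*k), (j : ℕ) < n ∧ p = s(none, some j)}

lemma Xn_zero (k : ℕ) : Xn k 0 = ∅ := by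
  ext p; simp [Xn]

lemma Xn_succ (k n : ℕ) (hn : n < 2*k) :
    insert s((none : Option (Fin (2*k))), some ⟨n, hn⟩) (Xn k n) = Xn k (n+1) := by
  ext p
  simp only [Set.mem_insert_iff, Xn, Set.mem_setOf_eq]
  constructor
  · rintro (rfl | ⟨j, hj, rfl⟩)
    · exact ⟨⟨n, hn⟩, by simp, rfl⟩
    · exact ⟨j, by omega, rfl⟩
  · rintro ⟨j, hj, rfl⟩
    rcases Nat.lt_succ_iff_lt_or_eq.mp hj with h | h
    · right; exact ⟨j, h, rfl⟩
    · left
      rw [show j = (⟨n, hn⟩ : Fin (2*k)) from Fin.ext h]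

lemma star_edge {n : ℕ} (x : Sym2 (Option (Fin n))) (hx : x ∈ (starGraph n).edgeSet) :
    ∃ j : Fin n, x = s((none : Option (Fin n)), some j) := by
  induction x using Sym2.ind with
  | _ a b =>
    rw [SimpleGraph.mem_edgeSet] at hx
    rcases hx with ⟨h1, h2⟩ | ⟨h1, h2⟩
    · obtain ⟨j, rfl⟩ := Option.ne_none_iff_exists'.mp h2
      exact ⟨j, by rw [h1]⟩
    · obtain ⟨j, rfl⟩ := Option.ne_none_iff_exists'.mp h2
      exact ⟨j, by rw [h1, Sym2.eq_swap]⟩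

lemma star_adj_center {n : ℕ} (j : Fin n) :
    (starGraph n).Adj (none : Option (Fin n)) (some j) :=
  Or.inl ⟨rfl, by simp⟩

lemma star_adj_leaf {n : ℕ} (j : Fin n) :
    (starGraph n).Adj (some j) (none : Option (Fin n)) :=
  Or.inr ⟨rfl, by simp⟩

lemma reach (k : ℕ) (e : ℝ) (he : (4*k-1:ℝ) ≤ e)
    (p0 : Fin (k+1) → Option (Fin (2*k))) (hp0 : p0 0 = none)
    (en0 : Fin (k+1) → ℝ) (hen0 : en0 0 = e) :
    ∀ n, n < 2*k → Relation.ReflTransGen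
      (ExpStep (starGraph (2*k)) (fun _ => (1:ℝ)) (k+1))
      (p0, en0, ∅) (p0, Function.update en0 0 (e - 2*n), Xn k n) := by
  intro n
  induction n with
  | zero =>
    intro _
    have h1 : Function.update en0 0 (e - 2*((0:ℕ):ℝ)) = en0 := by
      rw [show e - 2*((0:ℕ):ℝ) = en0 0 by rw [hen0]; norm_num]
      exact Function.update_eq_self _ _
    rw [h1, Xn_zero]
  | succ n ih =>
    intro hn1
    have hn : n < 2*k := Nat.lt_of_succ_lt hn1
    have hcast : (n:ℝ) + 2 ≤ 2*(k:ℝ) := by exact_mod_cast (by omega : n + 2 ≤ 2*k)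
    set jn : Fin (2*k) := ⟨n, hn⟩ with hjn
    have hA : ExpStep (starGraph (2*k)) (fun _ => (1:ℝ)) (k+1)
        (p0, Function.update en0 0 (e - 2*n), Xn k n)
        (Function.update p0 0 (some jn),
         Function.update (Function.update en0 0 (e - 2*n)) 0
           (Function.update en0 0 (e - 2*n) 0 - (fun _ => (1:ℝ)) s(p0 0, some jn)),
         insert s(p0 0, some jn) (Xn k n)) := by
      refine ExpStep.move _ _ _ 0 (some jn) ?_ ?_
      · rw [hp0]; exact star_adj_center jn
      · rw [Function.update_self]
        show (1:ℝ) ≤ e - 2*n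
        linarith
    set pos1 := Function.update p0 0 (some jn) with hpos1
    set en1 := Function.update (Function.update en0 0 (e - 2*n)) 0
        (Function.update en0 0 (e - 2*n) 0 - (fun _ => (1:ℝ)) s(p0 0, some jn)) with hen1
    set X1 := insert s(p0 0, some jn) (Xn k n) with hX1
    have hen1z : en1 0 = e - 2*n - 1 := by
      rw [hen1, Function.update_self, Function.update_self]
    have hB : ExpStep (starGraph (2*k)) (fun _ => (1:ℝ)) (k+1)
        (pos1, en1, X1)
        (Function.update pos1 0 none,
         Function.update en1 0 (en1 0 - (fun _ => (1:ℝ)) s(pos1 0, none)),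
         insert s(pos1 0, none) X1) := by
      refine ExpStep.move _ _ _ 0 none ?_ ?_
      · rw [hpos1, Function.update_self]; exact star_adj_leaf jn
      · rw [hen1z]
        show (1:ℝ) ≤ e - 2*n - 1
        linarith
    have hEq : ((Function.update pos1 0 none,
         Function.update en1 0 (en1 0 - (fun _ => (1:ℝ)) s(pos1 0, none)),
         insert s(pos1 0, none) X1) :
          (Fin (k+1) → Option (Fin (2*k))) × (Fin (k+1) → ℝ) ×
            Set (Sym2 (Option (Fin (2*k))))) =
        (p0, Function.update en0 0 (e - 2*((n+1:ℕ):ℝ)), Xn k (n+1)) := by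
      refine Prod.ext ?_ (Prod.ext ?_ ?_)
      · show Function.update pos1 0 none = p0
        rw [hpos1, Function.update_idem,
          show (none : Option (Fin (2*k))) = p0 0 from hp0.symm]
        exact Function.update_eq_self _ _
      · show Function.update en1 0 (en1 0 - (fun _ => (1:ℝ)) s(pos1 0, none)) =
          Function.update en0 0 (e - 2*((n+1:ℕ):ℝ))
        rw [hen1z, hen1, Function.update_idem, Function.update_idem]
        have : e - 2*(n:ℝ) - 1 - 1 = e - 2*(((n+1):ℕ):ℝ) := by push_cast; ring
        rw [this]
      · show insert s(pos1 0, none) X1 = Xn k (n+1)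
        rw [hpos1, Function.update_self, hX1, hp0, Sym2.eq_swap, Set.insert_idem]
        exact Xn_succ k n hn
    rw [hEq] at hB
    exact ((ih hn).tail hA).tail hB

lemma inv_reach {k : ℕ} {e : ℝ} {a b : (Fin (k+1) → Option (Fin (2*k))) × (Fin (k+1) → ℝ) ×
      Set (Sym2 (Option (Fin (2*k))))}
    (h : Relation.ReflTransGen (ExpStep (starGraph (2*k)) (fun _ => (1:ℝ)) (k+1)) a b) :
    StarInv k e a → StarInv k e b := by
  induction h with
  | refl => exact id
  | tail _ hstep ih => exact fun ha => inv_step hstep (ih ha)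

/-- On the star `K_{1,2k}` with unit edge weights, with one agent of energy
`e` at the center and `k` agents of energy `0` at the leaves `l₁, …, l_k`, an
energy-sharing exploration strategy exists if and only if `e ≥ 4k - 1`. -/
theorem star_exploration_iff (k : ℕ) (hk : 1 ≤ k) (e : ℝ) (he : 0 ≤ e) :
    CanExplore (starGraph (2 * k)) (fun _ => 1) (k + 1)
      (Fin.cases none (fun j : Fin k => some (Fin.castLE (by omega) j)))
      (Fin.cases e (fun _ => 0)) ↔
    (4 * k - 1 : ℝ) ≤ e := by
  constructor
  · rintro ⟨st, hsteps, hsub⟩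
    have h0 : StarInv k e
        (Fin.cases none (fun j : Fin k => some (Fin.castLE (by omega) j)),
         Fin.cases e (fun _ => 0), ∅) := by
      refine ⟨?_, ?_, ?_⟩
      · intro i
        revert i
        refine Fin.cases ?_ (fun j' => ?_) <;> simp [he]
      · intro j i hnot hpos
        revert hpos
        refine Fin.cases ?_ (fun j' => ?_) i <;> intro hpos
        · simp at hpos
        · simp
      · have h1 : expl k (∅ : Set (Sym2 (Option (Fin (2*k))))) = 0 := by
          unfold expl; simp
        have h2 : Lnum k
            (Fin.cases none (fun j : Fin k => some (Fin.castLE (by omega) j))) = k := by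
          unfold Lnum
          rw [Fin.sum_univ_succ]
          simp
        have h3 : ∑ i, (Fin.cases e (fun _ => 0) : Fin (k+1) → ℝ) i = e := by
          rw [Fin.sum_univ_succ]
          simp
        simp only [h1, h2, h3]
        linarith
    obtain ⟨hnn, -, hineq⟩ := inv_reach hsteps h0
    have hexpl : expl k st.2.2 = 2*(k:ℝ) := by
      unfold expl
      rw [Finset.sum_congr rfl (fun j _ =>
        if_pos (hsub ((SimpleGraph.mem_edgeSet _).mpr (star_adj_center j))))]
      simp [Finset.card_univ]
    have hL : Lnum k st.1 ≤ (k:ℝ)+1 := by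
      unfold Lnum
      calc ∑ i : Fin (k+1), (if st.1 i = none then (0:ℝ) else 1)
          ≤ ∑ _i : Fin (k+1), (1:ℝ) :=
            Finset.sum_le_sum (fun i _ => by split_ifs <;> norm_num)
        _ = (k:ℝ)+1 := by simp
    have hS : 0 ≤ ∑ i, st.2.1 i := Finset.sum_nonneg fun i _ => hnn i
    rw [hexpl] at hineq
    linarith
  · intro he'
    have hr := reach k e he'
      (Fin.cases none (fun j : Fin k => some (Fin.castLE (by omega) j))) (by simp)
      (Fin.cases e (fun _ => 0)) (by simp) (2*k-1) (by omega)
    have hcast : ((2*k-1:ℕ):ℝ) = 2*(k:ℝ) - 1 := by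
      have h1 : (1:ℕ) ≤ 2*k := by omega
      push_cast [h1]
      ring
    set jl : Fin (2*k) := ⟨2*k-1, by omega⟩ with hjl
    have hm := ExpStep.move (G := starGraph (2*k)) (w := fun _ => (1:ℝ))
      (Fin.cases none (fun j : Fin k => some (Fin.castLE (by omega) j)))
      (Function.update (Fin.cases e (fun _ => 0) : Fin (k+1) → ℝ) 0 (e - 2*((2*k-1:ℕ):ℝ)))
      (Xn k (2*k-1)) 0 (some jl)
      (by simp only [Fin.cases_zero]; exact star_adj_center jl)
      (by rw [Function.update_self, hcast]
          show (1:ℝ) ≤ e - 2*(2*(k:ℝ) - 1)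
          linarith)
    refine ⟨_, hr.tail hm, ?_⟩
    intro x hx
    obtain ⟨j, rfl⟩ := star_edge x hx
    show s((none : Option (Fin (2*k))), some j) ∈
      insert s((Fin.cases none (fun j : Fin k => some (Fin.castLE (by omega) j)) :
        Fin (k+1) → Option (Fin (2*k))) 0, some jl) (Xn k (2*k-1))
    simp only [Fin.cases_zero]
    rw [hjl, Xn_succ k (2*k-1) (by omega), show 2*k-1+1 = 2*k from by omega]
    exact ⟨j, j.isLt, rfl⟩
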